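/- Assume r ≤ d ≤ 1. Then the quadruple y_n = −b̄_n, y_{n+m} = (n+1) − 2a_n − b_n, y_1 = 0, y_{n+1} = 1 + a_{n+m} − a_n is such that (0, y) is a solution of the four-variable system (S); in particular λ = 0 is an eigenvalue of (S). -/

import Mathlib

open Finset

/-- The four-variable system (S), with variables `y1 = y_1`, `yn = y_n`,
`yn1 = y_{n+1}`, `ynm = y_{n+m}`. -/
def Ssol (n m : ℕ) (a : ℕ → ℝ) (lam y1 yn yn1 ynm : ℝ) : Prop :=
  yn = min ((1 - (a n + a (n + m))) - 2 * lam + y1 + yn1 - ynm)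
      ((∑ i ∈ Finset.Icc 1 (n - 1), a i) - ((n : ℝ) - 1) * lam + y1) ∧
  ynm = min ((1 - (a n + a (n + m))) - lam + y1 + yn1 - yn)
      ((∑ i ∈ Finset.Icc (n + 1) (n + m - 1), a i) - ((m : ℝ) - 1) * lam + yn1) ∧
  y1 = min (a n - lam + (yn + ynm) / 2)
      ((∑ i ∈ Finset.Icc 1 (n - 1), (1 - a i)) - ((n : ℝ) - 1) * lam + yn) ∧
  yn1 = min (a (n + m) - lam + (yn + ynm) / 2)
      ((∑ i ∈ Finset.Icc (n + 1) (n + m - 1), (1 - a i)) - ((m : ℝ) - 1) * lam + ynm)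

theorem stmt9 (n m : ℕ) (hn : 2 ≤ n) (hm : 2 ≤ m) (a : ℕ → ℝ)
    (ha : ∀ i : ℕ, 1 ≤ i → i ≤ n + m → 0 ≤ a i ∧ a i ≤ 1)
    (hprio : a n + a (n + m) ≤ 1)
    (d r : ℝ) (hd : d = (∑ i ∈ Finset.Icc 1 (n + m), a i) / ((n : ℝ) + (m : ℝ) - 1))
    (hr : r = (n : ℝ) / ((n : ℝ) + (m : ℝ) - 1))
    (hrd : r ≤ d) (hd1 : d ≤ 1) :
    Ssol n m a 0 0
      (-(∑ i ∈ Finset.Icc 1 (n - 1), (1 - a i)))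
      (1 + a (n + m) - a n)
      (((n : ℝ) + 1) - 2 * a n - (∑ i ∈ Finset.Icc 1 (n - 1), a i)) := by
  have hn1 : (1:ℝ) ≤ (n:ℝ) := by exact_mod_cast Nat.one_le_of_lt hn
  have hm1 : (2:ℝ) ≤ (m:ℝ) := by exact_mod_cast hm
  have hn2 : (2:ℝ) ≤ (n:ℝ) := by exact_mod_cast hn
  have hpos : (0:ℝ) < (n:ℝ) + (m:ℝ) - 1 := by linarith
  -- bounds on total sum
  have hSle : (∑ i ∈ Finset.Icc 1 (n + m), a i) ≤ (n:ℝ) + (m:ℝ) - 1 := by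
    rw [hd, div_le_one hpos] at hd1; exact hd1
  have hSge : (n:ℝ) ≤ ∑ i ∈ Finset.Icc 1 (n + m), a i := by
    rw [hr, hd, div_le_div_iff₀ hpos hpos] at hrd
    exact le_of_mul_le_mul_right hrd hpos
  -- split the total sum
  have hsplit : ∑ i ∈ Finset.Icc 1 (n + m), a i =
      (∑ i ∈ Finset.Icc 1 (n - 1), a i) + a n +
      (∑ i ∈ Finset.Icc (n + 1) (n + m - 1), a i) + a (n + m) := by
    have e0 : Finset.Icc 1 (n + m) = Finset.Ioc 0 (n + m) := by
      rw [← Finset.Icc_add_one_left_eq_Ioc]; rfl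
    have e1 : Finset.Icc 1 (n - 1) = Finset.Ioc 0 (n - 1) := by
      rw [← Finset.Icc_add_one_left_eq_Ioc]; rfl
    have e2 : Finset.Icc (n + 1) (n + m - 1) = Finset.Ioc n (n + m - 1) := by
      rw [← Finset.Icc_add_one_left_eq_Ioc]
    rw [e0, e1, e2]
    rw [← Finset.sum_Ioc_consecutive a (Nat.zero_le n) (by omega : n ≤ n + m)]
    have f1 : ∑ i ∈ Finset.Ioc 0 n, a i = (∑ i ∈ Finset.Ioc 0 (n-1), a i) + a n := by
      have : n = (n - 1) + 1 := by omega
      rw [this, Finset.sum_Ioc_succ_top (by omega)]; simp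
    have f2 : ∑ i ∈ Finset.Ioc n (n + m), a i =
        (∑ i ∈ Finset.Ioc n (n + m - 1), a i) + a (n + m) := by
      have : n + m = (n + m - 1) + 1 := by omega
      rw [this, Finset.sum_Ioc_succ_top (by omega)]; simp
    rw [f1, f2]; ring
  have hbarn : ∑ i ∈ Finset.Icc 1 (n - 1), (1 - a i) =
      ((n:ℝ) - 1) - ∑ i ∈ Finset.Icc 1 (n - 1), a i := by
    rw [Finset.sum_sub_distrib, Finset.sum_const, Nat.card_Icc]
    have : ((n - 1 + 1 - 1 : ℕ) : ℝ) = (n:ℝ) - 1 := by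
      push_cast [Nat.sub_add_cancel (by omega : 1 ≤ n)]
      rw [Nat.cast_sub (by omega)]; push_cast; ring
    rw [nsmul_eq_mul, this]; ring
  have hbarm : ∑ i ∈ Finset.Icc (n + 1) (n + m - 1), (1 - a i) =
      ((m:ℝ) - 1) - ∑ i ∈ Finset.Icc (n + 1) (n + m - 1), a i := by
    rw [Finset.sum_sub_distrib, Finset.sum_const, Nat.card_Icc]
    have : ((n + m - 1 + 1 - (n + 1) : ℕ) : ℝ) = (m:ℝ) - 1 := by
      have : n + m - 1 + 1 - (n + 1) = m - 1 := by omega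
      rw [this, Nat.cast_sub (by omega)]; push_cast; ring
    rw [nsmul_eq_mul, this]; ring
  rw [hsplit] at hSle hSge
  refine ⟨?_, ?_, ?_, ?_⟩
  · rw [hbarn, min_eq_left] <;> [skip; skip] <;> linarith
  · rw [hbarn, min_eq_left] <;> linarith
  · rw [hbarn, min_eq_right] <;> linarith
  · rw [hbarn, hbarm, min_eq_left] <;> linarith
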